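/- The partition determined by the connected components of a noncrossing hyperforest is a noncrossing partition. -/

import Mathlib

/-- An alternating path in a hypergraph: a list of vertices and a list of hyperedges,
with each hyperedge belonging to the hypergraph and containing the two vertices around it. -/
def IsHyperPath {V : Type*} (E : Finset (Finset V)) : List V → List (Finset V) → Prop
  | [_], [] => True
  | u :: v :: vs, e :: es => e ∈ E ∧ u ∈ e ∧ v ∈ e ∧ IsHyperPath E (v :: vs) es
  | _, _ => False

/-- Two vertices are joined by a path in the hypergraph. -/
def Reachable {V : Type*} (E : Finset (Finset V)) (u v : V) : Prop :=
  ∃ vs es, IsHyperPath E vs es ∧ vs.head? = some u ∧ vs.getLast? = some v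

/-- Every pair of vertices is joined by a path. -/
def Connected {V : Type*} (E : Finset (Finset V)) : Prop := ∀ u v, Reachable E u v

/-- A nontrivial simple cycle: a closed path of length at least two with distinct
hyperedges and distinct vertices except that the endpoints are equal. -/
def HasSimpleCycle {V : Type*} (E : Finset (Finset V)) : Prop :=
  ∃ (vs : List V) (es : List (Finset V)), IsHyperPath E vs es ∧ 2 ≤ es.length ∧
    es.Nodup ∧ vs.dropLast.Nodup ∧ vs.head? = vs.getLast?

/-- A hyperforest: hyperedges have size at least two and there are no nontrivial simple cycles. -/
def IsHyperforest {V : Type*} (E : Finset (Finset V)) : Prop :=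
  (∀ e ∈ E, 2 ≤ e.card) ∧ ¬ HasSimpleCycle E

/-- A hypertree is a connected hyperforest. -/
def IsHypertree {V : Type*} (E : Finset (Finset V)) : Prop := IsHyperforest E ∧ Connected E
/-- The vertices of a convex polygon with `m` vertices, realized on the unit circle. -/
noncomputable def vtx (m : ℕ) (i : Fin m) : ℝ × ℝ :=
  (Real.cos (2 * Real.pi * (i : ℕ) / m), Real.sin (2 * Real.pi * (i : ℕ) / m))

/-- Two subsets of the vertices of a convex polygon are weakly noncrossing when their
convex hulls have at most one point in common, and that point is a common vertex. -/
def WeaklyNoncrossing (m : ℕ) (A B : Finset (Fin m)) : Prop :=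
  (convexHull ℝ (vtx m '' ↑A) ∩ convexHull ℝ (vtx m '' ↑B)).Subsingleton ∧
    convexHull ℝ (vtx m '' ↑A) ∩ convexHull ℝ (vtx m '' ↑B) ⊆ vtx m '' ↑(A ∩ B)

/-- A noncrossing hyperforest: a hyperforest whose hyperedges are pairwise weakly noncrossing. -/
def IsNCHyperforest (m : ℕ) (E : Finset (Finset (Fin m))) : Prop :=
  IsHyperforest E ∧ ∀ e ∈ E, ∀ f ∈ E, e ≠ f → WeaklyNoncrossing m e f

/-- A noncrossing hypertree: a connected noncrossing hyperforest. -/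
def IsNCHypertree (m : ℕ) (E : Finset (Finset (Fin m))) : Prop :=
  IsNCHyperforest m E ∧ Connected E

open Real

def ERel {V : Type*} (E : Finset (Finset V)) (x y : V) : Prop := ∃ e ∈ E, x ∈ e ∧ y ∈ e

theorem ERel.symm {V : Type*} {E : Finset (Finset V)} : Symmetric (ERel E) := by
  rintro x y ⟨e, he, hx, hy⟩; exact ⟨e, he, hy, hx⟩

theorem path_rtg {V : Type*} {E : Finset (Finset V)} :
    ∀ (vs : List V) (es : List (Finset V)), IsHyperPath E vs es →
      ∀ u v, vs.head? = some u → vs.getLast? = some v → Relation.ReflTransGen (ERel E) u v := by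
  intro vs
  induction vs with
  | nil => intro es h; cases es <;> simp [IsHyperPath] at h
  | cons a rest ih =>
    intro es h u v hu hv
    cases rest with
    | nil =>
      cases es with
      | nil => simp at hu hv; subst hu; subst hv; exact Relation.ReflTransGen.refl
      | cons e es' => simp [IsHyperPath] at h
    | cons b rest' =>
      cases es with
      | nil => simp [IsHyperPath] at h
      | cons e es' =>
        obtain ⟨he, ha, hb, hrest⟩ := h
        simp at hu; subst hu
        rw [List.getLast?_cons_cons] at hv
        exact Relation.ReflTransGen.head ⟨e, he, ha, hb⟩ (ih es' hrest b v rfl hv)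

theorem path_snoc {V : Type*} {E : Finset (Finset V)} :
    ∀ (vs : List V) (es : List (Finset V)), IsHyperPath E vs es →
      ∀ b v e, vs.getLast? = some b → e ∈ E → b ∈ e → v ∈ e →
      IsHyperPath E (vs ++ [v]) (es ++ [e]) := by
  intro vs
  induction vs with
  | nil => intro es h; cases es <;> simp [IsHyperPath] at h
  | cons a rest ih =>
    intro es h b v e hb he hbe hve
    cases rest with
    | nil =>
      cases es with
      | nil =>
        simp at hb; subst hb
        exact ⟨he, hbe, hve, trivial⟩
      | cons e' es' => simp [IsHyperPath] at h
    | cons c rest' =>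
      cases es with
      | nil => simp [IsHyperPath] at h
      | cons e' es' =>
        obtain ⟨he', ha, hc, hrest⟩ := h
        rw [List.getLast?_cons_cons] at hb
        exact ⟨he', ha, hc, ih es' hrest b v e hb he hbe hve⟩

theorem rtg_reach {V : Type*} {E : Finset (Finset V)} {u v : V}
    (h : Relation.ReflTransGen (ERel E) u v) : Reachable E u v := by
  induction h with
  | refl => exact ⟨[u], [], trivial, rfl, rfl⟩
  | tail hab hr ih =>
    obtain ⟨vs, es, hp, hh, hl⟩ := ih
    obtain ⟨e, he, h1, h2⟩ := hr
    refine ⟨vs ++ [_], es ++ [e], path_snoc vs es hp _ _ e hl he h1 h2, ?_, ?_⟩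
    · cases vs with
      | nil => simp at hh
      | cons a r => simpa using hh
    · simp

theorem reach_iff {V : Type*} {E : Finset (Finset V)} {u v : V} :
    Reachable E u v ↔ Relation.ReflTransGen (ERel E) u v := by
  constructor
  · rintro ⟨vs, es, hp, hh, hl⟩; exact path_rtg vs es hp u v hh hl
  · exact rtg_reach

noncomputable def ang (m : ℕ) (i : Fin m) : ℝ := 2 * Real.pi * (i : ℕ) / m

noncomputable def Dsin (m : ℕ) (i j k : Fin m) : ℝ :=
  Real.sin (ang m j - ang m i) + Real.sin (ang m k - ang m j) + Real.sin (ang m i - ang m k)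

/-- side function of chord (a,c) -/
noncomputable def Fc (m : ℕ) (a c : Fin m) (z : ℝ × ℝ) : ℝ :=
  ((vtx m c).1 - (vtx m a).1) * (z.2 - (vtx m a).2)
    - ((vtx m c).2 - (vtx m a).2) * (z.1 - (vtx m a).1)

def ccw {m : ℕ} (i j k : Fin m) : Prop :=
  (i < j ∧ j < k) ∨ (j < k ∧ k < i) ∨ (k < i ∧ i < j)

theorem key3 {u v : ℝ} (hu : 0 < u) (hv : 0 < v) (huv : u + v < 2 * π) :
    0 < Real.sin u + Real.sin v - Real.sin (u + v) := by
  have h1 : Real.sin u + Real.sin v = 2 * Real.sin ((u + v) / 2) * Real.cos ((u - v) / 2) := by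
    rw [show u = (u + v) / 2 + (u - v) / 2 by ring, show v = (u + v) / 2 - (u - v) / 2 by ring,
      Real.sin_add, Real.sin_sub]
    ring_nf
  have h2 : Real.sin (u + v) = 2 * Real.sin ((u + v) / 2) * Real.cos ((u + v) / 2) := by
    rw [show u + v = 2 * ((u + v) / 2) by ring, Real.sin_two_mul]; ring_nf
  have hs : 0 < Real.sin ((u + v) / 2) :=
    Real.sin_pos_of_pos_of_lt_pi (by linarith) (by linarith)
  have hc : Real.cos ((u + v) / 2) < Real.cos ((u - v) / 2) := by
    rcases le_total ((u - v)/2) 0 with hle | hle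
    · rw [show (u - v)/2 = -((v - u)/2) by ring, Real.cos_neg]
      exact Real.cos_lt_cos_of_nonneg_of_le_pi (by linarith) (by linarith) (by linarith)
    · exact Real.cos_lt_cos_of_nonneg_of_le_pi hle (by linarith) (by linarith)
  nlinarith

theorem ang_lt {m : ℕ} {i j : Fin m} (h : i < j) : ang m i < ang m j := by
  have hm : (0:ℝ) < m := by exact_mod_cast Fin.pos i
  have : (i:ℝ) < (j:ℝ) := by exact_mod_cast h
  unfold ang
  have hpi := Real.pi_pos
  rw [div_lt_div_iff₀ hm hm]
  have h2 : 2 * π * (i:ℝ) < 2 * π * (j:ℝ) := by nlinarith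
  nlinarith [mul_lt_mul_of_pos_right h2 hm]

theorem ang_nonneg {m : ℕ} (i : Fin m) : 0 ≤ ang m i := by
  have hm : (0:ℝ) < m := by exact_mod_cast Fin.pos i
  have hpi := Real.pi_pos
  unfold ang
  positivity

theorem ang_lt_two_pi {m : ℕ} (i : Fin m) : ang m i < 2 * π := by
  have hm : (0:ℝ) < m := by exact_mod_cast Fin.pos i
  have : (i:ℝ) < (m:ℝ) := by exact_mod_cast i.isLt
  have hpi := Real.pi_pos
  unfold ang
  rw [div_lt_iff₀ hm]
  nlinarith

theorem Dsin_cyc {m : ℕ} (i j k : Fin m) : Dsin m i j k = Dsin m j k i := by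
  unfold Dsin; ring

theorem Dsin_swap {m : ℕ} (i j k : Fin m) : Dsin m i k j = -Dsin m i j k := by
  unfold Dsin
  rw [show ang m k - ang m i = -(ang m i - ang m k) by ring,
      show ang m j - ang m k = -(ang m k - ang m j) by ring,
      show ang m i - ang m j = -(ang m j - ang m i) by ring,
      Real.sin_neg, Real.sin_neg, Real.sin_neg]
  ring

theorem Dsin_pos_of_lt {m : ℕ} {i j k : Fin m} (h1 : i < j) (h2 : j < k) :
    0 < Dsin m i j k := by
  have a1 := ang_lt h1
  have a2 := ang_lt h2
  have a3 := ang_nonneg i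
  have a4 := ang_lt_two_pi k
  have := key3 (u := ang m j - ang m i) (v := ang m k - ang m j)
    (by linarith) (by linarith) (by linarith)
  unfold Dsin
  rw [show ang m i - ang m k = -((ang m j - ang m i) + (ang m k - ang m j)) by ring,
    Real.sin_neg]
  linarith

theorem Dsin_pos {m : ℕ} {i j k : Fin m} (h : ccw i j k) : 0 < Dsin m i j k := by
  rcases h with ⟨h1, h2⟩ | ⟨h1, h2⟩ | ⟨h1, h2⟩
  · exact Dsin_pos_of_lt h1 h2
  · rw [Dsin_cyc]; exact Dsin_pos_of_lt h1 h2
  · rw [Dsin_cyc, Dsin_cyc]; exact Dsin_pos_of_lt h1 h2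

theorem ccw_total {m : ℕ} {i j k : Fin m} (hij : i ≠ j) (hjk : j ≠ k) (hik : i ≠ k) :
    ccw i j k ∨ ccw i k j := by
  unfold ccw
  rcases lt_trichotomy i j with h | h | h <;> rcases lt_trichotomy j k with h' | h' | h' <;>
    rcases lt_trichotomy i k with h'' | h'' | h'' <;> tauto


theorem ccw_of_Dsin_pos {m : ℕ} {i j k : Fin m} (hij : i ≠ j) (hjk : j ≠ k) (hik : i ≠ k)
    (h : 0 < Dsin m i j k) : ccw i j k := by
  rcases ccw_total hij hjk hik with hc | hc
  · exact hc
  · have := Dsin_pos hc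
    rw [Dsin_swap] at this
    linarith

theorem Fc_eq_Dsin (m : ℕ) (a c b : Fin m) : Fc m a c (vtx m b) = Dsin m a c b := by
  unfold Fc Dsin vtx ang
  simp only [Real.sin_sub, Real.cos_sub]
  ring

/-- squared norm -/
def nsq (z : ℝ × ℝ) : ℝ := z.1 ^ 2 + z.2 ^ 2

theorem nsq_vtx {m : ℕ} (i : Fin m) : nsq (vtx m i) = 1 := by
  unfold nsq vtx
  simp [Real.sin_sq_add_cos_sq, Real.cos_sq_add_sin_sq]

theorem vtx_injective {m : ℕ} : Function.Injective (vtx m) := by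
  intro i j hij
  by_contra hne
  have key : ∀ a b : Fin m, a < b → vtx m a = vtx m b → False := by
    intro a b hab h
    have hc : Real.cos (ang m a) = Real.cos (ang m b) := congrArg Prod.fst h
    have hs : Real.sin (ang m a) = Real.sin (ang m b) := congrArg Prod.snd h
    have h1 : Real.cos (ang m b - ang m a) = 1 := by
      rw [Real.cos_sub, ← hc, ← hs]
      nlinarith [Real.sin_sq_add_cos_sq (ang m a)]
    have h2 : 0 < ang m b - ang m a := by linarith [ang_lt hab]
    have h3 : ang m b - ang m a < 2 * π := by
      linarith [ang_nonneg a, ang_lt_two_pi b]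
    have := Real.cos_eq_one_iff_of_lt_of_lt (x := ang m b - ang m a) (by linarith) h3
    rw [this] at h1
    linarith
  rcases Ne.lt_or_gt hne with h | h
  · exact key i j h hij
  · exact key j i h hij.symm

theorem nsq_combo (X Y : ℝ × ℝ) (s t : ℝ) (hst : s + t = 1) :
    nsq (s • X + t • Y) = s * nsq X + t * nsq Y - s * t * nsq (X - Y) := by
  obtain rfl : t = 1 - s := by linarith
  simp only [nsq, Prod.smul_fst, Prod.smul_snd, Prod.fst_add, Prod.snd_add, Prod.fst_sub,
    Prod.snd_sub, smul_eq_mul]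
  ring

theorem nsq_seg_le {X Y q : ℝ × ℝ} (hX : nsq X = 1) (hY : nsq Y = 1)
    (hq : q ∈ segment ℝ X Y) : nsq q ≤ 1 := by
  obtain ⟨s, t, hs, ht, hst, rfl⟩ := hq
  rw [nsq_combo X Y s t hst, hX, hY]
  have h1 : 0 ≤ nsq (X - Y) := by unfold nsq; positivity
  nlinarith [mul_nonneg (mul_nonneg hs ht) h1]

theorem chord_param {A C q : ℝ × ℝ} (hA : nsq A = 1) (hC : nsq C = 1) (hAC : A ≠ C)
    (hq : nsq q ≤ 1) (t : ℝ) (hqeq : q = (1 - t) • A + t • C) :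
    q ∈ segment ℝ A C ∧ (nsq q = 1 → q = A ∨ q = C) := by
  have hCA : 0 < nsq (C - A) := by
    have h0 : 0 ≤ nsq (C - A) := by unfold nsq; positivity
    rcases lt_or_eq_of_le h0 with h | h
    · exact h
    · exfalso; apply hAC
      simp only [nsq, Prod.fst_sub, Prod.snd_sub] at h
      have h1 : C.1 = A.1 := by nlinarith [sq_nonneg (C.1 - A.1), sq_nonneg (C.2 - A.2)]
      have h2 : C.2 = A.2 := by nlinarith [sq_nonneg (C.1 - A.1), sq_nonneg (C.2 - A.2)]
      exact Prod.ext h1.symm h2.symm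
  have hnq : nsq q = 1 - t * (1 - t) * nsq (C - A) := by
    rw [hqeq, nsq_combo A C (1 - t) t (by ring), hA, hC]
    have : A - C = -(C - A) := by ring
    rw [this, show nsq (-(C - A)) = nsq (C - A) by unfold nsq; simp; ring]
    ring
  have ht0 : 0 ≤ t * (1 - t) := by nlinarith [hq, hnq, hCA]
  have ht1 : 0 ≤ t := by nlinarith
  have ht2 : t ≤ 1 := by nlinarith
  refine ⟨⟨1 - t, t, by linarith, ht1, by ring, hqeq.symm⟩, ?_⟩
  intro hq1
  have hz : t * (1 - t) = 0 := by nlinarith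
  rcases mul_eq_zero.1 hz with h | h
  · left; rw [hqeq, h]; simp
  · right; rw [hqeq, show t = 1 by linarith]; simp

theorem chord_lemma {A C q : ℝ × ℝ} (hA : nsq A = 1) (hC : nsq C = 1) (hAC : A ≠ C)
    (hq : nsq q ≤ 1)
    (h0 : (C.1 - A.1) * (q.2 - A.2) - (C.2 - A.2) * (q.1 - A.1) = 0) :
    q ∈ segment ℝ A C ∧ (nsq q = 1 → q = A ∨ q = C) := by
  have hS : 0 < (C.1 - A.1) ^ 2 + (C.2 - A.2) ^ 2 := by
    rcases lt_or_eq_of_le (show (0:ℝ) ≤ (C.1 - A.1) ^ 2 + (C.2 - A.2) ^ 2 by positivity)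
      with h | h
    · exact h
    · exfalso; apply hAC
      have h1 : C.1 = A.1 := by nlinarith [sq_nonneg (C.1 - A.1), sq_nonneg (C.2 - A.2)]
      have h2 : C.2 = A.2 := by nlinarith [sq_nonneg (C.1 - A.1), sq_nonneg (C.2 - A.2)]
      exact Prod.ext h1.symm h2.symm
  refine chord_param hA hC hAC hq
    (((q.1 - A.1) * (C.1 - A.1) + (q.2 - A.2) * (C.2 - A.2)) / ((C.1 - A.1) ^ 2 + (C.2 - A.2) ^ 2))
    ?_
  have hSne : ((C.1 - A.1) ^ 2 + (C.2 - A.2) ^ 2) ≠ 0 := ne_of_gt hS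
  apply Prod.ext
  · simp only [Prod.fst_add, Prod.smul_fst, smul_eq_mul]
    field_simp
    linear_combination (-(C.2 - A.2)) * h0
  · simp only [Prod.snd_add, Prod.smul_snd, smul_eq_mul]
    field_simp
    linear_combination (C.1 - A.1) * h0

theorem Fc_affine (m : ℕ) (a c : Fin m) (X Y : ℝ × ℝ) (s t : ℝ) (hst : s + t = 1) :
    Fc m a c (s • X + t • Y) = s * Fc m a c X + t * Fc m a c Y := by
  obtain rfl : s = 1 - t := by linarith
  simp only [Fc, Prod.fst_add, Prod.snd_add, Prod.smul_fst, Prod.smul_snd, smul_eq_mul]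
  ring

theorem Fc_self_left (m : ℕ) (a c : Fin m) : Fc m a c (vtx m a) = 0 := by unfold Fc; ring

theorem Fc_self_right (m : ℕ) (a c : Fin m) : Fc m a c (vtx m c) = 0 := by unfold Fc; ring

theorem Fc_aa (m : ℕ) (a : Fin m) (z : ℝ × ℝ) : Fc m a a z = 0 := by unfold Fc; ring

theorem cross_point {m : ℕ} {a c : Fin m} {X Y : ℝ × ℝ}
    (hX : Fc m a c X ≤ 0) (hY : 0 ≤ Fc m a c Y) :
    ∃ q ∈ segment ℝ X Y, Fc m a c q = 0 := by
  rcases eq_or_lt_of_le hX with h | h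
  · exact ⟨X, left_mem_segment ℝ X Y, h⟩
  · have hd : 0 < Fc m a c Y - Fc m a c X := by linarith
    set t := -Fc m a c X / (Fc m a c Y - Fc m a c X) with hT
    have ht0 : 0 ≤ t := by apply div_nonneg <;> linarith
    have ht1 : t ≤ 1 := by rw [hT, div_le_one hd]; linarith
    refine ⟨(1 - t) • X + t • Y, ⟨1 - t, t, by linarith, ht0, by ring, rfl⟩, ?_⟩
    rw [Fc_affine m a c X Y (1 - t) t (by ring), hT]
    field_simp
    ring

theorem convex_halfplane_le (m : ℕ) (a c : Fin m) : Convex ℝ {z | 0 ≤ Fc m a c z} := by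
  intro x hx y hy s t hs ht hst
  simp only [Set.mem_setOf_eq] at *
  rw [Fc_affine m a c x y s t hst]
  nlinarith [mul_nonneg hs hx, mul_nonneg ht hy]

theorem convex_halfplane_lt (m : ℕ) (a c : Fin m) : Convex ℝ {z | Fc m a c z < 0} := by
  intro x hx y hy s t hs ht hst
  simp only [Set.mem_setOf_eq] at *
  rw [Fc_affine m a c x y s t hst]
  rcases eq_or_lt_of_le hs with h | h
  · rw [← h]; simpa using mul_pos (show (0:ℝ) < t by linarith) (neg_pos.2 hy)
  · nlinarith [mul_pos h (neg_pos.2 hx), mul_nonneg ht (le_of_lt (neg_pos.2 hy))]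

-- sign change lemma
theorem sign_change {V : Type*} {E : Finset (Finset V)} (g : V → ℝ) {b d : V}
    (h : Relation.ReflTransGen (ERel E) b d) (h1 : g b ≤ 0) (h2 : 0 < g d) :
    ∃ x x' e, e ∈ E ∧ x ∈ e ∧ x' ∈ e ∧ g x ≤ 0 ∧ 0 ≤ g x' ∧
      Relation.ReflTransGen (ERel E) b x := by
  revert h1 h2
  induction h using Relation.ReflTransGen.head_induction_on with
  | refl => intro h1 h2; linarith
  | head hr hrest ih =>
    rename_i p q
    intro h1 h2
    by_cases hq : 0 ≤ g q
    · obtain ⟨e, he, hp1, hp2⟩ := hr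
      exact ⟨p, q, e, he, hp1, hp2, h1, hq, Relation.ReflTransGen.refl⟩
    · push_neg at hq
      obtain ⟨x, x', e, he, hx, hx', hgx, hgx', hqx⟩ := ih (le_of_lt hq) h2
      exact ⟨x, x', e, he, hx, hx', hgx, hgx', Relation.ReflTransGen.head hr hqx⟩

theorem ccw_cross {m : ℕ} {a c y y' : Fin m} (h1 : ccw a y c) (h2 : ccw a c y')
    (h3 : y ≠ y') (h4 : a ≠ y') (h5 : c ≠ y) (h6 : a ≠ y) (h7 : c ≠ y') (h8 : a ≠ c) :
    ccw y y' a ∧ ccw y c y' := by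
  have e3 := Fin.val_ne_of_ne h3
  have e4 := Fin.val_ne_of_ne h4
  have e5 := Fin.val_ne_of_ne h5
  have e6 := Fin.val_ne_of_ne h6
  have e7 := Fin.val_ne_of_ne h7
  have e8 := Fin.val_ne_of_ne h8
  simp only [ccw, Fin.lt_def] at h1 h2 ⊢
  omega

theorem claimN {m : ℕ} {E : Finset (Finset (Fin m))}
    (hNC : ∀ e ∈ E, ∀ f ∈ E, e ≠ f → WeaklyNoncrossing m e f) {u w : Fin m}
    (hnr : ¬ Relation.ReflTransGen (ERel E) u w) {a c b d : Fin m}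
    (ha : Relation.ReflTransGen (ERel E) u a) (hc : Relation.ReflTransGen (ERel E) u c)
    (hb : Relation.ReflTransGen (ERel E) w b) (hd : Relation.ReflTransGen (ERel E) w d)
    (hsb : Fc m a c (vtx m b) < 0) (hsd : 0 < Fc m a c (vtx m d)) : False := by
  have hdisj : ∀ x, Relation.ReflTransGen (ERel E) u x →
      Relation.ReflTransGen (ERel E) w x → False := by
    intro x h1 h2
    exact hnr (h1.trans ((Std.Symm.symm (self := @Relation.ReflTransGen.stdSymm _ (ERel E) ⟨fun _ _ hh => ERel.symm hh⟩) _ _) h2))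
  have hac : a ≠ c := by
    intro h; rw [h, Fc_aa] at hsb; linarith
  have hvac : vtx m a ≠ vtx m c := fun h => hac (vtx_injective h)
  -- level 1: path from b to d in component of w
  have hbd : Relation.ReflTransGen (ERel E) b d :=
    ((Std.Symm.symm (self := @Relation.ReflTransGen.stdSymm _ (ERel E) ⟨fun _ _ hh => ERel.symm hh⟩) _ _) hb).trans hd
  obtain ⟨y, y', f2, hf2E, hyf, hy'f, hgy, hgy', hby⟩ :=
    sign_change (fun z => Fc m a c (vtx m z)) hbd (le_of_lt hsb) hsd
  have hwy : Relation.ReflTransGen (ERel E) w y := hb.trans hby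
  have hwy' : Relation.ReflTransGen (ERel E) w y' := hwy.tail ⟨f2, hf2E, hyf, hy'f⟩
  -- strictness upgrade
  have hstrict : ∀ z : Fin m, Relation.ReflTransGen (ERel E) w z →
      Fc m a c (vtx m z) ≠ 0 := by
    intro z hwz h0
    have hqle : nsq (vtx m z) ≤ 1 := le_of_eq (nsq_vtx z)
    have := (chord_lemma (nsq_vtx a) (nsq_vtx c) hvac hqle h0).2 (nsq_vtx z)
    rcases this with h | h
    · exact hdisj z (by rw [vtx_injective h]; exact ha) hwz
    · exact hdisj z (by rw [vtx_injective h]; exact hc) hwz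
  have hgys : Fc m a c (vtx m y) < 0 := lt_of_le_of_ne hgy (hstrict y hwy)
  have hgy's : 0 < Fc m a c (vtx m y') := lt_of_le_of_ne hgy' (Ne.symm (hstrict y' hwy'))
  -- distinctness
  have hyy' : y ≠ y' := by intro h; rw [h] at hgys; linarith
  have hay : a ≠ y := fun h => hdisj y (h ▸ ha) hwy
  have hcy : c ≠ y := fun h => hdisj y (h ▸ hc) hwy
  have hay' : a ≠ y' := fun h => hdisj y' (h ▸ ha) hwy'
  have hcy' : c ≠ y' := fun h => hdisj y' (h ▸ hc) hwy'
  -- ccw facts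
  rw [Fc_eq_Dsin] at hgys hgy's
  have hccw1 : ccw a y c := by
    apply ccw_of_Dsin_pos hay (Ne.symm hcy) hac
    rw [Dsin_swap]; linarith
  have hccw2 : ccw a c y' := ccw_of_Dsin_pos hac hcy' hay' hgy's
  obtain ⟨hccw3, hccw4⟩ := ccw_cross hccw1 hccw2 hyy' hay' hcy hay hcy' hac
  have hFa : 0 < Fc m y y' (vtx m a) := by rw [Fc_eq_Dsin]; exact Dsin_pos hccw3
  have hFc : Fc m y y' (vtx m c) < 0 := by
    rw [Fc_eq_Dsin]
    have := Dsin_pos hccw4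
    rw [Dsin_swap] at this; linarith
  -- level 2: path from c to a in component of u
  have hca : Relation.ReflTransGen (ERel E) c a :=
    ((Std.Symm.symm (self := @Relation.ReflTransGen.stdSymm _ (ERel E) ⟨fun _ _ hh => ERel.symm hh⟩) _ _) hc).trans ha
  obtain ⟨x, x', e1, he1E, hxe, hx'e, hgx, hgx', hcx⟩ :=
    sign_change (fun z => Fc m y y' (vtx m z)) hca (le_of_lt hFc) hFa
  have hux : Relation.ReflTransGen (ERel E) u x := hc.trans hcx
  -- crossing point
  obtain ⟨q, hqseg, hq0⟩ := cross_point hgx hgx'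
  have hqle : nsq q ≤ 1 := nsq_seg_le (nsq_vtx x) (nsq_vtx x') hqseg
  have hvyy' : vtx m y ≠ vtx m y' := fun h => hyy' (vtx_injective h)
  have hqseg2 : q ∈ segment ℝ (vtx m y) (vtx m y') :=
    (chord_lemma (nsq_vtx y) (nsq_vtx y') hvyy' hqle hq0).1
  -- q in both hulls
  have hq1 : q ∈ convexHull ℝ (vtx m '' ↑e1) :=
    segment_subset_convexHull (Set.mem_image_of_mem _ (Finset.mem_coe.2 hxe))
      (Set.mem_image_of_mem _ (Finset.mem_coe.2 hx'e)) hqseg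
  have hq2 : q ∈ convexHull ℝ (vtx m '' ↑f2) :=
    segment_subset_convexHull (Set.mem_image_of_mem _ (Finset.mem_coe.2 hyf))
      (Set.mem_image_of_mem _ (Finset.mem_coe.2 hy'f)) hqseg2
  -- e1 ≠ f2
  have hne : e1 ≠ f2 := by
    intro h
    exact hdisj x hux (hwy.tail ⟨f2, hf2E, hyf, h ▸ hxe⟩)
  obtain ⟨z, hz, -⟩ := (hNC e1 he1E f2 hf2E hne).2 ⟨hq1, hq2⟩
  rw [Finset.coe_inter] at hz
  obtain ⟨hz1, hz2⟩ := hz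
  exact hdisj z (hux.tail ⟨e1, he1E, hxe, hz1⟩) (hwy.tail ⟨f2, hf2E, hyf, hz2⟩)

theorem gap_pair {m : ℕ} (A : Finset (Fin m)) (h2 : 2 ≤ A.card) (b0 : Fin m) (hb0 : b0 ∉ A) :
    ∃ a c, a ∈ A ∧ c ∈ A ∧ a ≠ c ∧ ccw a b0 c ∧ ∀ x ∈ A, ¬ ccw a x c := by
  classical
  have hA : A.Nonempty := Finset.card_pos.1 (by omega)
  by_cases h1 : (A.filter (fun z => z < b0)).Nonempty <;>
    by_cases h2' : (A.filter (fun z => b0 < z)).Nonempty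
  · -- both sides nonempty
    have haA := Finset.mem_filter.1 ((A.filter (fun z => z < b0)).max'_mem h1)
    have hcA := Finset.mem_filter.1 ((A.filter (fun z => b0 < z)).min'_mem h2')
    have hab : (A.filter (fun z => z < b0)).max' h1 < b0 := haA.2
    have hbc : b0 < (A.filter (fun z => b0 < z)).min' h2' := hcA.2
    refine ⟨(A.filter (fun z => z < b0)).max' h1, (A.filter (fun z => b0 < z)).min' h2',
      haA.1, hcA.1, ne_of_lt (lt_trans hab hbc), Or.inl ⟨hab, hbc⟩, ?_⟩
    intro x hx hccw
    rcases hccw with ⟨hax, hxc⟩ | ⟨hxc, hca⟩ | ⟨hca, hax⟩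
    · rcases lt_trichotomy x b0 with h | h | h
      · have hle : x ≤ (A.filter (fun z => z < b0)).max' h1 :=
          Finset.le_max' (A.filter (fun z => z < b0)) x (Finset.mem_filter.2 ⟨hx, h⟩)
        exact absurd hax (not_lt.2 hle)
      · exact hb0 (h ▸ hx)
      · have hle : (A.filter (fun z => b0 < z)).min' h2' ≤ x :=
          Finset.min'_le (A.filter (fun z => b0 < z)) x (Finset.mem_filter.2 ⟨hx, h⟩)
        exact absurd hxc (not_lt.2 hle)
    · exact absurd hca (not_lt.2 (le_of_lt (lt_trans hab hbc)))
    · exact absurd hca (not_lt.2 (le_of_lt (lt_trans hab hbc)))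
  · -- all of A below b0
    have hall : ∀ x ∈ A, x < b0 := by
      intro x hx
      rcases lt_trichotomy x b0 with h | h | h
      · exact h
      · exact absurd (h ▸ hx) hb0
      · exact absurd (⟨x, Finset.mem_filter.2 ⟨hx, h⟩⟩) h2'
    have hca : A.min' hA < A.max' hA := Finset.min'_lt_max'_of_card A (by omega)
    have hab : A.max' hA < b0 := hall _ (A.max'_mem hA)
    refine ⟨A.max' hA, A.min' hA, A.max'_mem hA, A.min'_mem hA, ne_of_gt hca,
      Or.inr (Or.inr ⟨hca, hab⟩), ?_⟩
    intro x hx hccw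
    have hxa : x ≤ A.max' hA := Finset.le_max' A x hx
    have hcx : A.min' hA ≤ x := Finset.min'_le A x hx
    rcases hccw with ⟨hax, hxc⟩ | ⟨hxc, hca'⟩ | ⟨hca', hax⟩
    · exact absurd hax (not_lt.2 hxa)
    · exact absurd hxc (not_lt.2 hcx)
    · exact absurd hax (not_lt.2 hxa)
  · -- all of A above b0
    have hall : ∀ x ∈ A, b0 < x := by
      intro x hx
      rcases lt_trichotomy x b0 with h | h | h
      · exact absurd (⟨x, Finset.mem_filter.2 ⟨hx, h⟩⟩) h1
      · exact absurd (h ▸ hx) hb0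
      · exact h
    have hca : A.min' hA < A.max' hA := Finset.min'_lt_max'_of_card A (by omega)
    have hbc : b0 < A.min' hA := hall _ (A.min'_mem hA)
    refine ⟨A.max' hA, A.min' hA, A.max'_mem hA, A.min'_mem hA, ne_of_gt hca,
      Or.inr (Or.inl ⟨hbc, hca⟩), ?_⟩
    intro x hx hccw
    have hxa : x ≤ A.max' hA := Finset.le_max' A x hx
    have hcx : A.min' hA ≤ x := Finset.min'_le A x hx
    rcases hccw with ⟨hax, hxc⟩ | ⟨hxc, hca'⟩ | ⟨hca', hax⟩
    · exact absurd hax (not_lt.2 hxa)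
    · exact absurd hxc (not_lt.2 hcx)
    · exact absurd hax (not_lt.2 hxa)
  · exfalso
    obtain ⟨x, hx⟩ := hA
    rcases lt_trichotomy x b0 with h | h | h
    · exact h1 (⟨x, Finset.mem_filter.2 ⟨hx, h⟩⟩)
    · exact hb0 (h ▸ hx)
    · exact h2' (⟨x, Finset.mem_filter.2 ⟨hx, h⟩⟩)

theorem sep_main {m : ℕ} (A B : Finset (Fin m)) (hAB : ∀ x, x ∈ A → x ∈ B → False)
    (hNA : ∀ a ∈ A, ∀ c ∈ A, ∀ b ∈ B, ∀ d ∈ B,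
      ¬(Fc m a c (vtx m b) < 0 ∧ 0 < Fc m a c (vtx m d)))
    (h2 : 2 ≤ A.card) (hB : B.Nonempty) :
    Disjoint (convexHull ℝ (vtx m '' ↑A)) (convexHull ℝ (vtx m '' ↑B)) := by
  obtain ⟨b0, hb0⟩ := hB
  obtain ⟨a, c, haA, hcA, hac, hccw0, hgap⟩ :=
    gap_pair A h2 b0 (fun h => hAB b0 h hb0)
  have hFb0 : Fc m a c (vtx m b0) < 0 := by
    rw [Fc_eq_Dsin]
    have := Dsin_pos hccw0
    rw [Dsin_swap] at this; linarith
  have hBneg : ∀ b ∈ B, Fc m a c (vtx m b) < 0 := by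
    intro b hbB
    have hba : a ≠ b := fun h => hAB a haA (h ▸ hbB)
    have hbc : b ≠ c := fun h => hAB c hcA (h ▸ hbB)
    rcases ccw_total hba hbc (hac) with hcw | hcw
    · rw [Fc_eq_Dsin]
      have := Dsin_pos hcw
      rw [Dsin_swap] at this; linarith
    · exfalso
      apply hNA a haA c hcA b0 hb0 b hbB
      refine ⟨hFb0, ?_⟩
      rw [Fc_eq_Dsin]
      exact Dsin_pos hcw
  have hApos : ∀ x ∈ A, 0 ≤ Fc m a c (vtx m x) := by
    intro x hx
    by_cases hxa : x = a
    · rw [hxa, Fc_self_left]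
    · by_cases hxc : x = c
      · rw [hxc, Fc_self_right]
      · rcases ccw_total (Ne.symm hxa) (hxc) hac with hcw | hcw
        · exact absurd hcw (hgap x hx)
        · rw [Fc_eq_Dsin]
          exact le_of_lt (Dsin_pos hcw)
  have hullA : convexHull ℝ (vtx m '' ↑A) ⊆ {z | 0 ≤ Fc m a c z} := by
    apply convexHull_min _ (convex_halfplane_le m a c)
    rintro _ ⟨x, hx, rfl⟩
    exact hApos x hx
  have hullB : convexHull ℝ (vtx m '' ↑B) ⊆ {z | Fc m a c z < 0} := by
    apply convexHull_min _ (convex_halfplane_lt m a c)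
    rintro _ ⟨x, hx, rfl⟩
    exact hBneg x hx
  rw [Set.disjoint_left]
  intro p hp1 hp2
  have := hullA hp1
  have := hullB hp2
  simp only [Set.mem_setOf_eq] at *
  linarith

theorem sep_final {m : ℕ} (A B : Finset (Fin m)) (hAB : ∀ x, x ∈ A → x ∈ B → False)
    (hNA : ∀ a ∈ A, ∀ c ∈ A, ∀ b ∈ B, ∀ d ∈ B,
      ¬(Fc m a c (vtx m b) < 0 ∧ 0 < Fc m a c (vtx m d)))
    (hNB : ∀ b ∈ B, ∀ d ∈ B, ∀ a ∈ A, ∀ c ∈ A,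
      ¬(Fc m b d (vtx m a) < 0 ∧ 0 < Fc m b d (vtx m c)))
    (hA : A.Nonempty) (hB : B.Nonempty) :
    Disjoint (convexHull ℝ (vtx m '' ↑A)) (convexHull ℝ (vtx m '' ↑B)) := by
  by_cases hA2 : 2 ≤ A.card
  · exact sep_main A B hAB hNA hA2 hB
  · by_cases hB2 : 2 ≤ B.card
    · exact (sep_main B A (fun x h1 h2 => hAB x h2 h1) hNB hB2 hA).symm
    · have hA1 : A.card = 1 := by have := Finset.card_pos.2 hA; omega
      have hB1 : B.card = 1 := by have := Finset.card_pos.2 hB; omega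
      obtain ⟨a, rfl⟩ := Finset.card_eq_one.1 hA1
      obtain ⟨b, rfl⟩ := Finset.card_eq_one.1 hB1
      have hab : vtx m a ≠ vtx m b := fun h =>
        hAB a (Finset.mem_singleton_self a)
          (by rw [vtx_injective h]; exact Finset.mem_singleton_self b)
      simp only [Finset.coe_singleton, Set.image_singleton, convexHull_singleton]
      exact Set.disjoint_singleton.2 hab

/-- The partition determined by the connected components of a noncrossing hyperforest is a
noncrossing partition: the convex hulls of distinct blocks are disjoint. -/
theorem stmt7 (m : ℕ) (E : Finset (Finset (Fin m))) (h : IsNCHyperforest m E)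
    (u w : Fin m) (hnr : ¬ Reachable E u w) :
    Disjoint (convexHull ℝ (vtx m '' {x | Reachable E u x}))
             (convexHull ℝ (vtx m '' {x | Reachable E w x})) := by
  classical
  have hnr' : ¬ Relation.ReflTransGen (ERel E) u w := fun hh => hnr (rtg_reach hh)
  set Au := Finset.univ.filter (fun x => Reachable E u x) with hAudef
  set Aw := Finset.univ.filter (fun x => Reachable E w x) with hAwdef
  have hAu : {x | Reachable E u x} = ↑Au := by ext x; simp [hAudef]
  have hAw : {x | Reachable E w x} = ↑Aw := by ext x; simp [hAwdef]
  rw [hAu, hAw]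
  have memAu : ∀ x, x ∈ Au → Relation.ReflTransGen (ERel E) u x := by
    intro x hx
    rw [hAudef, Finset.mem_filter] at hx
    exact reach_iff.1 hx.2
  have memAw : ∀ x, x ∈ Aw → Relation.ReflTransGen (ERel E) w x := by
    intro x hx
    rw [hAwdef, Finset.mem_filter] at hx
    exact reach_iff.1 hx.2
  apply sep_final
  · intro x h1 h2
    exact hnr' ((memAu x h1).trans ((Std.Symm.symm (self := @Relation.ReflTransGen.stdSymm _ (ERel E) ⟨fun _ _ hh => ERel.symm hh⟩) _ _) (memAw x h2)))
  · intro a haA c hcA b hbB d hdB ⟨hs1, hs2⟩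
    exact claimN h.2 hnr' (memAu a haA) (memAu c hcA) (memAw b hbB) (memAw d hdB) hs1 hs2
  · intro b hbB d hdB a haA c hcA ⟨hs1, hs2⟩
    have hnr'' : ¬ Relation.ReflTransGen (ERel E) w u := fun hh =>
      hnr' ((Std.Symm.symm (self := @Relation.ReflTransGen.stdSymm _ (ERel E) ⟨fun _ _ hh => ERel.symm hh⟩) _ _) hh)
    exact claimN h.2 hnr'' (memAw b hbB) (memAw d hdB) (memAu a haA) (memAu c hcA) hs1 hs2
  · exact ⟨u, by simp [hAudef]; exact rtg_reach Relation.ReflTransGen.refl⟩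
  · exact ⟨w, by simp [hAwdef]; exact rtg_reach Relation.ReflTransGen.refl⟩
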